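/- Let G be a (finite simple) graph with maximum degree Δ and let k ≥ 1 be an integer. If e(G) > (k−1)·Δ and Δ ≥ 2k−1, then G contains a matching of size k. -/

import Mathlib

open SimpleGraph

/-- The number of edges of a graph. -/
noncomputable def edgeCount {V : Type*} (G : SimpleGraph V) : ℕ := Nat.card G.edgeSet

/-- `t_r(n)`: the number of edges of the Turán graph `T_r(n)`. -/
noncomputable def turanNum (r n : ℕ) : ℕ := edgeCount (turanGraph n r)

/-- `D_r(G)`: the minimum number of edges that must be removed from `G` to make it
`r`-partite (i.e. `r`-colorable). -/
noncomputable def minDel {V : Type*} (r : ℕ) (G : SimpleGraph V) : ℕ :=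
  sInf {k | ∃ H : SimpleGraph V, H ≤ G ∧ H.Colorable r ∧ edgeCount G = edgeCount H + k}

/-- The blowup `G[n₁,…,n_k]` of a graph `G` on `Fin k`. -/
def blowup {k : ℕ} (G : SimpleGraph (Fin k)) (n : Fin k → ℕ) :
    SimpleGraph ((i : Fin k) × Fin (n i)) :=
  SimpleGraph.comap Sigma.fst G

/-- The adjacency relation of the pentagon `v₁v₂v₅v₄v₃` on `{0,…,4}` (0-indexed),
i.e. the edges `v₁v₂, v₂v₅, v₅v₄, v₄v₃, v₃v₁`. -/
def pentAdj (a b : ℕ) : Prop :=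
  (a = 0 ∧ b = 1) ∨ (a = 1 ∧ b = 0) ∨ (a = 1 ∧ b = 4) ∨ (a = 4 ∧ b = 1) ∨
  (a = 4 ∧ b = 3) ∨ (a = 3 ∧ b = 4) ∨ (a = 3 ∧ b = 2) ∨ (a = 2 ∧ b = 3) ∨
  (a = 2 ∧ b = 0) ∨ (a = 0 ∧ b = 2)

lemma pentAdj_symm {a b : ℕ} (h : pentAdj a b) : pentAdj b a := by
  rcases h with ⟨rfl, rfl⟩|⟨rfl, rfl⟩|⟨rfl, rfl⟩|⟨rfl, rfl⟩|⟨rfl, rfl⟩|⟨rfl, rfl⟩|⟨rfl, rfl⟩|⟨rfl, rfl⟩|⟨rfl, rfl⟩|⟨rfl, rfl⟩ <;> simp [pentAdj]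

/-- The graph `L_r` on `r+3` vertices: the first five vertices induce the pentagon
`v₁v₂v₅v₄v₃`, and all other pairs of distinct vertices are adjacent. -/
def Lgraph (r : ℕ) : SimpleGraph (Fin (r + 3)) where
  Adj a b := a ≠ b ∧ (5 ≤ (a : ℕ) ∨ 5 ≤ (b : ℕ) ∨ pentAdj (a : ℕ) (b : ℕ))
  symm := ⟨fun a b h => ⟨h.1.symm, by
    rcases h.2 with h2 | h2 | h2
    · exact Or.inr (Or.inl h2)
    · exact Or.inl h2
    · exact Or.inr (Or.inr (pentAdj_symm h2))⟩⟩
  loopless := ⟨fun a h => h.1 rfl⟩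

/-- The sequence of part sizes `x, y, y, nn 0, nn 1, …` for a blowup of `L_r`. -/
def pentSizes (x y : ℕ) (nn : ℕ → ℕ) : ℕ → ℕ
  | 0 => x
  | 1 => y
  | 2 => y
  | m + 3 => nn m

/-- The pentagon blowup `L_r[x, y, y, nn 0, …, nn (r-1)]`. -/
def pentagonBlowup (r x y : ℕ) (nn : ℕ → ℕ) :
    SimpleGraph ((i : Fin (r + 3)) × Fin (pentSizes x y nn i.val)) :=
  blowup (Lgraph r) (fun i => pentSizes x y nn i.val)


open Finset

variable {V : Type} [Fintype V] [DecidableEq V] (G : SimpleGraph V) [DecidableRel G.Adj]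

/-- A representation of a matching as a finset of ordered pairs of adjacent vertices,
pairwise vertex-disjoint. -/
def IsMRep (R : Finset (V × V)) : Prop :=
  (∀ p ∈ R, G.Adj p.1 p.2) ∧
  ∀ p ∈ R, ∀ q ∈ R, p ≠ q → p.1 ≠ q.1 ∧ p.1 ≠ q.2 ∧ p.2 ≠ q.1 ∧ p.2 ≠ q.2

def vertsF (R : Finset (V × V)) : Finset V := R.biUnion (fun p => {p.1, p.2})

variable {G}

lemma mem_vertsF {R : Finset (V × V)} {v : V} :
    v ∈ vertsF R ↔ ∃ p ∈ R, v = p.1 ∨ v = p.2 := by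
  simp [vertsF, or_comm, eq_comm]

lemma IsMRep.subset {R S : Finset (V × V)} (h : IsMRep G R) (hs : S ⊆ R) : IsMRep G S :=
  ⟨fun p hp => h.1 p (hs hp), fun p hp q hq => h.2 p (hs hp) q (hs hq)⟩

lemma IsMRep.ne {R : Finset (V × V)} (h : IsMRep G R) {p : V × V} (hp : p ∈ R) : p.1 ≠ p.2 :=
  (h.1 p hp).ne

lemma card_vertsF {R : Finset (V × V)} (h : IsMRep G R) : (vertsF R).card = 2 * R.card := by
  rw [vertsF, card_biUnion]
  · rw [Finset.sum_congr rfl (fun p hp => ?_), Finset.sum_const, smul_eq_mul, mul_comm]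
    rw [card_insert_of_notMem (by simp [h.ne hp]), card_singleton]
  · intro p hp q hq hne
    have := h.2 p hp q hq hne
    simp only [disjoint_insert_left, disjoint_singleton_left, mem_insert, mem_singleton]
    tauto

set_option linter.unusedSectionVars false

open Classical in
/-- There is a matching representation of maximum cardinality. -/
lemma exists_max_mrep (G : SimpleGraph V) :
    ∃ R : Finset (V × V), IsMRep G R ∧ ∀ S : Finset (V × V), IsMRep G S → S.card ≤ R.card := by
  classical
  have hne : ((univ : Finset (Finset (V × V))).filter (fun R => IsMRep G R)).Nonempty := by
    refine ⟨∅, ?_⟩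
    simp [IsMRep]
  obtain ⟨R, hR, hmax⟩ := Finset.exists_max_image _ Finset.card hne
  simp only [mem_filter, mem_univ, true_and] at hR hmax
  exact ⟨R, hR, fun S hS => hmax S (by simp [hS])⟩

/-- The master swap lemma: given a maximum matching rep `R`, a subset `S ⊆ R`, and a
replacement set `T` of pairwise disjoint adjacent pairs all of whose vertices avoid
`vertsF R \ vertsF S`, with `T.card = S.card + 1`, we get a contradiction. -/
lemma swap_contra {R : Finset (V × V)} (hR : IsMRep G R)
    (hmax : ∀ S : Finset (V × V), IsMRep G S → S.card ≤ R.card)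
    {S T : Finset (V × V)} (hSR : S ⊆ R)
    (hTadj : ∀ p ∈ T, G.Adj p.1 p.2)
    (hTdisj : ∀ p ∈ T, ∀ q ∈ T, p ≠ q → p.1 ≠ q.1 ∧ p.1 ≠ q.2 ∧ p.2 ≠ q.1 ∧ p.2 ≠ q.2)
    (hTfresh : ∀ p ∈ T, (p.1 ∉ vertsF R ∨ p.1 ∈ vertsF S) ∧ (p.2 ∉ vertsF R ∨ p.2 ∈ vertsF S))
    (hcard : T.card = S.card + 1) : False := by
  classical
  -- vertices of T avoid vertsF (R \ S)
  have key : ∀ p ∈ T, ∀ v : V, (v = p.1 ∨ v = p.2) → v ∉ vertsF (R \ S) := by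
    intro p hp v hv hmem
    obtain ⟨q, hq, hvq⟩ := mem_vertsF.mp hmem
    rw [mem_sdiff] at hq
    have hqR := hq.1
    have hqS := hq.2
    -- v is in vertsF R
    have hvR : v ∈ vertsF R := mem_vertsF.mpr ⟨q, hqR, hvq⟩
    have hvS : v ∈ vertsF S := by
      rcases hv with rfl | rfl
      · rcases (hTfresh p hp).1 with h | h
        · exact absurd hvR h
        · exact h
      · rcases (hTfresh p hp).2 with h | h
        · exact absurd hvR h
        · exact h
    obtain ⟨q', hq', hvq'⟩ := mem_vertsF.mp hvS
    have hq'R := hSR hq'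
    by_cases hqq : q = q'
    · exact hqS (hqq ▸ hq')
    · have hd := hR.2 q hqR q' hq'R hqq
      rcases hvq with rfl | rfl <;> rcases hvq' with h | h <;> tauto
  have hTR : Disjoint T (R \ S) := by
    rw [Finset.disjoint_left]
    intro p hpT hpRS
    exact key p hpT p.1 (Or.inl rfl) (mem_vertsF.mpr ⟨p, hpRS, Or.inl rfl⟩)
  have hrep : IsMRep G ((R \ S) ∪ T) := by
    constructor
    · intro p hp
      rcases Finset.mem_union.mp hp with h | h
      · exact hR.1 p (Finset.mem_sdiff.mp h).1
      · exact hTadj p h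
    · intro p hp q hq hne
      rcases Finset.mem_union.mp hp with h1 | h1 <;> rcases Finset.mem_union.mp hq with h2 | h2
      · exact hR.2 p (Finset.mem_sdiff.mp h1).1 q (Finset.mem_sdiff.mp h2).1 hne
      · have k1 := key q h2 q.1 (Or.inl rfl)
        have k2 := key q h2 q.2 (Or.inr rfl)
        have m1 : p.1 ∈ vertsF (R \ S) := mem_vertsF.mpr ⟨p, h1, Or.inl rfl⟩
        have m2 : p.2 ∈ vertsF (R \ S) := mem_vertsF.mpr ⟨p, h1, Or.inr rfl⟩
        refine ⟨?_, ?_, ?_, ?_⟩ <;> intro h <;> first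
          | exact k1 (h ▸ m1) | exact k2 (h ▸ m1) | exact k1 (h ▸ m2) | exact k2 (h ▸ m2)
      · have k1 := key p h1 p.1 (Or.inl rfl)
        have k2 := key p h1 p.2 (Or.inr rfl)
        have m1 : q.1 ∈ vertsF (R \ S) := mem_vertsF.mpr ⟨q, h2, Or.inl rfl⟩
        have m2 : q.2 ∈ vertsF (R \ S) := mem_vertsF.mpr ⟨q, h2, Or.inr rfl⟩
        refine ⟨?_, ?_, ?_, ?_⟩ <;> intro h <;> first
          | exact k1 (h ▸ m1) | exact k2 (h ▸ m1) | exact k1 (h ▸ m2) | exact k2 (h ▸ m2)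
      · exact hTdisj p h1 q h2 hne
  have hc : ((R \ S) ∪ T).card = R.card + 1 := by
    rw [Finset.card_union_of_disjoint hTR.symm, Finset.card_sdiff_of_subset hSR, hcard]
    have := Finset.card_le_card hSR
    omega
  have := hmax _ hrep
  omega

section Swaps

variable {R : Finset (V × V)} (hR : IsMRep G R)
  (hmax : ∀ S : Finset (V × V), IsMRep G S → S.card ≤ R.card)

include hR hmax

/-- F0 : unmatched vertices form an independent set. -/
lemma F0 {x y : V} (hx : x ∉ vertsF R) (hy : y ∉ vertsF R) (hadj : G.Adj x y) : False := by
  refine swap_contra hR hmax (S := ∅) (T := {(x,y)}) (Finset.empty_subset R) ?_ ?_ ?_ ?_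
  · simpa using hadj
  · simp
  · simp [hx, hy]
  · simp

/-- F1 : the two ends of a matching pair cannot see two distinct unmatched vertices. -/
lemma F1 {p : V × V} (hp : p ∈ R) {x y : V} (hx : x ∉ vertsF R) (hy : y ∉ vertsF R)
    (hxy : x ≠ y) (h1 : G.Adj p.1 x) (h2 : G.Adj p.2 y) : False := by
  have hne := hR.ne hp
  have hx1 : x ≠ p.1 := fun h => hx (h ▸ mem_vertsF.mpr ⟨p, hp, Or.inl rfl⟩)
  have hx2 : x ≠ p.2 := fun h => hx (h ▸ mem_vertsF.mpr ⟨p, hp, Or.inr rfl⟩)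
  have hy1 : y ≠ p.1 := fun h => hy (h ▸ mem_vertsF.mpr ⟨p, hp, Or.inl rfl⟩)
  have hy2 : y ≠ p.2 := fun h => hy (h ▸ mem_vertsF.mpr ⟨p, hp, Or.inr rfl⟩)
  refine swap_contra hR hmax (S := {p}) (T := {(p.1,x), (p.2,y)})
    (Finset.singleton_subset_iff.mpr hp) ?_ ?_ ?_ ?_
  · intro q hq
    simp only [Finset.mem_insert, Finset.mem_singleton] at hq
    rcases hq with rfl | rfl
    · exact h1
    · exact h2
  · intro a ha b hb hab
    simp only [Finset.mem_insert, Finset.mem_singleton] at ha hb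
    rcases ha with rfl | rfl <;> rcases hb with rfl | rfl <;>
      simp_all [Prod.ext_iff] <;> tauto
  · intro a ha
    simp only [Finset.mem_insert, Finset.mem_singleton] at ha
    have hm1 : p.1 ∈ vertsF {p} := mem_vertsF.mpr ⟨p, Finset.mem_singleton_self p, Or.inl rfl⟩
    have hm2 : p.2 ∈ vertsF {p} := mem_vertsF.mpr ⟨p, Finset.mem_singleton_self p, Or.inr rfl⟩
    rcases ha with rfl | rfl <;> simp_all
  · rw [Finset.card_insert_of_notMem (by simp [Prod.ext_iff, hne]), Finset.card_singleton,
      Finset.card_singleton]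

end Swaps

lemma ne_of_pairs {R : Finset (V × V)} (hR : IsMRep G R) {p q : V × V} (hp : p ∈ R)
    (hq : q ∈ R) (hpq : p ≠ q) {a c : V} (ha : a = p.1 ∨ a = p.2)
    (hc : c = q.1 ∨ c = q.2) : a ≠ c := by
  have := hR.2 p hp q hq hpq
  rcases ha with rfl | rfl <;> rcases hc with rfl | rfl <;> tauto

lemma ne_unmatched {R : Finset (V × V)} {p : V × V} (hp : p ∈ R) {x a : V}
    (hx : x ∉ vertsF R) (ha : a = p.1 ∨ a = p.2) : x ≠ a := by
  rintro rfl
  exact hx (mem_vertsF.mpr ⟨p, hp, ha⟩)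

lemma coords_mem {p : V × V} {a b : V} (h : (a, b) = p ∨ (b, a) = p) :
    (a = p.1 ∨ a = p.2) ∧ (b = p.1 ∨ b = p.2) := by
  rcases h with rfl | rfl <;> simp

lemma coords_ne {R : Finset (V × V)} (hR : IsMRep G R) {p : V × V}
    (hp : p ∈ R) {a b : V} (h : (a, b) = p ∨ (b, a) = p) : a ≠ b := by
  have := hR.ne hp
  rcases h with rfl | rfl
  · exact this
  · exact this.symm

lemma mem_vertsF_of_mem {S : Finset (V × V)} {p : V × V} (hp : p ∈ S) {a : V}
    (ha : a = p.1 ∨ a = p.2) : a ∈ vertsF S := mem_vertsF.mpr ⟨p, hp, ha⟩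

section Swaps2

variable {R : Finset (V × V)} (hR : IsMRep G R)
  (hmax : ∀ S : Finset (V × V), IsMRep G S → S.card ≤ R.card)

include hR hmax

/-- F2 : the "3-for-2" swap. -/
lemma F2 {p q : V × V} (hp : p ∈ R) (hq : q ∈ R) (hpq : p ≠ q)
    {pa pb qa qb x y : V} (hpab : (pa, pb) = p ∨ (pb, pa) = p)
    (hqab : (qa, qb) = q ∨ (qb, qa) = q)
    (hx : x ∉ vertsF R) (hy : y ∉ vertsF R) (hxy : x ≠ y)
    (h1 : G.Adj pa x) (h2 : G.Adj qa y) (h3 : G.Adj pb qb) : False := by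
  obtain ⟨hpa, hpb⟩ := coords_mem hpab
  obtain ⟨hqa, hqb⟩ := coords_mem hqab
  have hpapb : pa ≠ pb := coords_ne hR hp hpab
  have hqaqb : qa ≠ qb := coords_ne hR hq hqab
  have hpaqa : pa ≠ qa := ne_of_pairs hR hp hq hpq hpa hqa
  have hpaqb : pa ≠ qb := ne_of_pairs hR hp hq hpq hpa hqb
  have hpbqa : pb ≠ qa := ne_of_pairs hR hp hq hpq hpb hqa
  have hpbqb : pb ≠ qb := ne_of_pairs hR hp hq hpq hpb hqb
  have hxpa := ne_unmatched hp hx hpa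
  have hxpb := ne_unmatched hp hx hpb
  have hxqa := ne_unmatched hq hx hqa
  have hxqb := ne_unmatched hq hx hqb
  have hypa := ne_unmatched hp hy hpa
  have hypb := ne_unmatched hp hy hpb
  have hyqa := ne_unmatched hq hy hqa
  have hyqb := ne_unmatched hq hy hqb
  have hpS : p ∈ ({p, q} : Finset (V × V)) := by simp
  have hqS : q ∈ ({p, q} : Finset (V × V)) := by simp
  refine swap_contra hR hmax (S := {p, q}) (T := {(pa,x), (qa,y), (pb,qb)}) ?_ ?_ ?_ ?_ ?_
  · intro r hr
    simp only [Finset.mem_insert, Finset.mem_singleton] at hr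
    rcases hr with rfl | rfl
    · exact hp
    · exact hq
  · intro r hr
    simp only [Finset.mem_insert, Finset.mem_singleton] at hr
    rcases hr with rfl | rfl | rfl
    · exact h1
    · exact h2
    · exact h3
  · intro r hr s hs hrs
    simp only [Finset.mem_insert, Finset.mem_singleton] at hr hs
    rcases hr with rfl | rfl | rfl <;> rcases hs with rfl | rfl | rfl
    · exact absurd rfl hrs
    · exact ⟨hpaqa, hypa.symm, hxqa, hxy⟩
    · exact ⟨hpapb, hpaqb, hxpb, hxqb⟩
    · exact ⟨hpaqa.symm, hxqa.symm, hypa, hxy.symm⟩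
    · exact absurd rfl hrs
    · exact ⟨hpbqa.symm, hqaqb, hypb, hyqb⟩
    · exact ⟨hpapb.symm, hxpb.symm, hpaqb.symm, hxqb.symm⟩
    · exact ⟨hpbqa, hypb.symm, hqaqb.symm, hyqb.symm⟩
    · exact absurd rfl hrs
  · intro r hr
    simp only [Finset.mem_insert, Finset.mem_singleton] at hr
    rcases hr with rfl | rfl | rfl
    · exact ⟨Or.inr (mem_vertsF_of_mem hpS hpa), Or.inl hx⟩
    · exact ⟨Or.inr (mem_vertsF_of_mem hqS hqa), Or.inl hy⟩
    · exact ⟨Or.inr (mem_vertsF_of_mem hpS hpb), Or.inr (mem_vertsF_of_mem hqS hqb)⟩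
  · have c1 : ({p, q} : Finset (V × V)).card = 2 := by
      rw [Finset.card_insert_of_notMem (by simpa using hpq), Finset.card_singleton]
    rw [c1]
    rw [Finset.card_insert_of_notMem ?h1, Finset.card_insert_of_notMem ?h2,
      Finset.card_singleton]
    case h1 =>
      simp only [Finset.mem_insert, Finset.mem_singleton, Prod.mk.injEq, not_or]
      exact ⟨fun h => hpaqa h.1, fun h => hpapb h.1⟩
    case h2 =>
      simp only [Finset.mem_singleton, Prod.mk.injEq]
      exact fun h => hpbqa.symm h.1

end Swaps2

section Swaps3

variable {R : Finset (V × V)} (hR : IsMRep G R)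
  (hmax : ∀ S : Finset (V × V), IsMRep G S → S.card ≤ R.card)

include hR hmax

/-- F4 : the "4-for-3" swap. -/
lemma F4 {p q l : V × V} (hp : p ∈ R) (hq : q ∈ R) (hl : l ∈ R)
    (hpq : p ≠ q) (hpl : p ≠ l) (hql : q ≠ l)
    {x y la lb : V} (hlab : (la, lb) = l ∨ (lb, la) = l)
    (hx : x ∉ vertsF R) (hy : y ∉ vertsF R) (hxy : x ≠ y)
    (h1 : G.Adj p.1 x) (h2 : G.Adj q.1 y) (h3 : G.Adj p.2 la) (h4 : G.Adj q.2 lb) :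
    False := by
  obtain ⟨hla, hlb⟩ := coords_mem hlab
  have ep : p.1 ≠ p.2 := hR.ne hp
  have eq' : q.1 ≠ q.2 := hR.ne hq
  have el : la ≠ lb := coords_ne hR hl hlab
  have p1q1 : p.1 ≠ q.1 := ne_of_pairs hR hp hq hpq (Or.inl rfl) (Or.inl rfl)
  have p1q2 : p.1 ≠ q.2 := ne_of_pairs hR hp hq hpq (Or.inl rfl) (Or.inr rfl)
  have p2q1 : p.2 ≠ q.1 := ne_of_pairs hR hp hq hpq (Or.inr rfl) (Or.inl rfl)
  have p2q2 : p.2 ≠ q.2 := ne_of_pairs hR hp hq hpq (Or.inr rfl) (Or.inr rfl)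
  have p1la : p.1 ≠ la := ne_of_pairs hR hp hl hpl (Or.inl rfl) hla
  have p1lb : p.1 ≠ lb := ne_of_pairs hR hp hl hpl (Or.inl rfl) hlb
  have p2la : p.2 ≠ la := ne_of_pairs hR hp hl hpl (Or.inr rfl) hla
  have p2lb : p.2 ≠ lb := ne_of_pairs hR hp hl hpl (Or.inr rfl) hlb
  have q1la : q.1 ≠ la := ne_of_pairs hR hq hl hql (Or.inl rfl) hla
  have q1lb : q.1 ≠ lb := ne_of_pairs hR hq hl hql (Or.inl rfl) hlb
  have q2la : q.2 ≠ la := ne_of_pairs hR hq hl hql (Or.inr rfl) hla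
  have q2lb : q.2 ≠ lb := ne_of_pairs hR hq hl hql (Or.inr rfl) hlb
  have xp1 : x ≠ p.1 := ne_unmatched hp hx (Or.inl rfl)
  have xp2 : x ≠ p.2 := ne_unmatched hp hx (Or.inr rfl)
  have xq1 : x ≠ q.1 := ne_unmatched hq hx (Or.inl rfl)
  have xq2 : x ≠ q.2 := ne_unmatched hq hx (Or.inr rfl)
  have xla : x ≠ la := ne_unmatched hl hx hla
  have xlb : x ≠ lb := ne_unmatched hl hx hlb
  have yp1 : y ≠ p.1 := ne_unmatched hp hy (Or.inl rfl)
  have yp2 : y ≠ p.2 := ne_unmatched hp hy (Or.inr rfl)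
  have yq1 : y ≠ q.1 := ne_unmatched hq hy (Or.inl rfl)
  have yq2 : y ≠ q.2 := ne_unmatched hq hy (Or.inr rfl)
  have yla : y ≠ la := ne_unmatched hl hy hla
  have ylb : y ≠ lb := ne_unmatched hl hy hlb
  have hpS : p ∈ ({p, q, l} : Finset (V × V)) := by simp
  have hqS : q ∈ ({p, q, l} : Finset (V × V)) := by simp
  have hlS : l ∈ ({p, q, l} : Finset (V × V)) := by simp
  refine swap_contra hR hmax (S := {p, q, l})
    (T := {(p.1,x), (q.1,y), (p.2,la), (q.2,lb)}) ?_ ?_ ?_ ?_ ?_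
  · intro r hr
    simp only [Finset.mem_insert, Finset.mem_singleton] at hr
    rcases hr with rfl | rfl | rfl
    · exact hp
    · exact hq
    · exact hl
  · intro r hr
    simp only [Finset.mem_insert, Finset.mem_singleton] at hr
    rcases hr with rfl | rfl | rfl | rfl
    · exact h1
    · exact h2
    · exact h3
    · exact h4
  · intro r hr s hs hrs
    simp only [Finset.mem_insert, Finset.mem_singleton] at hr hs
    rcases hr with rfl | rfl | rfl | rfl <;> rcases hs with rfl | rfl | rfl | rfl
    · exact absurd rfl hrs
    · exact ⟨p1q1, yp1.symm, xq1, hxy⟩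
    · exact ⟨ep, p1la, xp2, xla⟩
    · exact ⟨p1q2, p1lb, xq2, xlb⟩
    · exact ⟨p1q1.symm, xq1.symm, yp1, hxy.symm⟩
    · exact absurd rfl hrs
    · exact ⟨p2q1.symm, q1la, yp2, yla⟩
    · exact ⟨eq', q1lb, yq2, ylb⟩
    · exact ⟨ep.symm, xp2.symm, p1la.symm, xla.symm⟩
    · exact ⟨p2q1, yp2.symm, q1la.symm, yla.symm⟩
    · exact absurd rfl hrs
    · exact ⟨p2q2, p2lb, q2la.symm, el⟩
    · exact ⟨p1q2.symm, xq2.symm, p1lb.symm, xlb.symm⟩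
    · exact ⟨eq'.symm, yq2.symm, q1lb.symm, ylb.symm⟩
    · exact ⟨p2q2.symm, q2la, p2lb.symm, el.symm⟩
    · exact absurd rfl hrs
  · intro r hr
    simp only [Finset.mem_insert, Finset.mem_singleton] at hr
    rcases hr with rfl | rfl | rfl | rfl
    · exact ⟨Or.inr (mem_vertsF_of_mem hpS (Or.inl rfl)), Or.inl hx⟩
    · exact ⟨Or.inr (mem_vertsF_of_mem hqS (Or.inl rfl)), Or.inl hy⟩
    · exact ⟨Or.inr (mem_vertsF_of_mem hpS (Or.inr rfl)),
        Or.inr (mem_vertsF_of_mem hlS hla)⟩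
    · exact ⟨Or.inr (mem_vertsF_of_mem hqS (Or.inr rfl)),
        Or.inr (mem_vertsF_of_mem hlS hlb)⟩
  · have c1 : ({p, q, l} : Finset (V × V)).card = 3 := by
      rw [Finset.card_insert_of_notMem (by simp [hpq, hpl]),
        Finset.card_insert_of_notMem (by simpa using hql), Finset.card_singleton]
    rw [c1]
    rw [Finset.card_insert_of_notMem ?h1, Finset.card_insert_of_notMem ?h2,
      Finset.card_insert_of_notMem ?h3, Finset.card_singleton]
    case h1 =>
      simp only [Finset.mem_insert, Finset.mem_singleton, Prod.mk.injEq, not_or]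
      exact ⟨fun h => p1q1 h.1, fun h => ep h.1, fun h => p1q2 h.1⟩
    case h2 =>
      simp only [Finset.mem_insert, Finset.mem_singleton, Prod.mk.injEq, not_or]
      exact ⟨fun h => p2q1.symm h.1, fun h => eq' h.1⟩
    case h3 =>
      simp only [Finset.mem_singleton, Prod.mk.injEq]
      exact fun h => p2q2 h.1

end Swaps3

section Count

variable (G)

/-- Unmatched vertices. -/
def UF (R : Finset (V × V)) : Finset V := (vertsF R)ᶜ

/-- Number of unmatched neighbours. -/
def nn (R : Finset (V × V)) (w : V) : ℕ := (G.neighborFinset w ∩ UF R).card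

/-- Flexible pairs: first coordinate has at least two unmatched neighbours. -/
def flexP (R : Finset (V × V)) (p : V × V) : Prop := 2 ≤ nn G R p.1

instance (R : Finset (V × V)) (p : V × V) : Decidable (flexP G R p) := by
  unfold flexP; infer_instance

/-- Partners of flexible pairs. -/
def FPF (R : Finset (V × V)) : Finset V := (R.filter (flexP G R)).image Prod.snd

variable {G}

lemma mem_FPF {R : Finset (V × V)} {v : V} :
    v ∈ FPF G R ↔ ∃ q ∈ R, flexP G R q ∧ q.2 = v := by
  simp only [FPF, Finset.mem_image, Finset.mem_filter]
  tauto

/-- Double counting adjacencies between two finsets. -/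
lemma count_sym (A B : Finset V) :
    ∑ a ∈ A, (G.neighborFinset a ∩ B).card = ∑ b ∈ B, (G.neighborFinset b ∩ A).card := by
  have h : ∀ (X Y : Finset V) (a : V), (G.neighborFinset a ∩ Y).card
      = ∑ b ∈ Y, if G.Adj a b then 1 else 0 := by
    intro X Y a
    rw [← Finset.card_filter]
    congr 1
    ext b
    simp only [Finset.mem_inter, mem_neighborFinset, Finset.mem_filter]
    tauto
  calc ∑ a ∈ A, (G.neighborFinset a ∩ B).card
      = ∑ a ∈ A, ∑ b ∈ B, if G.Adj a b then 1 else 0 := by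
        exact Finset.sum_congr rfl fun a _ => h A B a
    _ = ∑ b ∈ B, ∑ a ∈ A, if G.Adj a b then 1 else 0 := Finset.sum_comm
    _ = ∑ b ∈ B, (G.neighborFinset b ∩ A).card := by
        refine Finset.sum_congr rfl fun b _ => ?_
        rw [h B A b]
        refine Finset.sum_congr rfl fun a _ => by
          simp only [G.adj_comm a b]

/-- Sum over the matched vertices equals sum over pairs. -/
lemma sum_vertsF {R : Finset (V × V)} (hR : IsMRep G R) (h : V → ℕ) :
    ∑ v ∈ vertsF R, h v = ∑ p ∈ R, (h p.1 + h p.2) := by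
  rw [vertsF, Finset.sum_biUnion]
  · refine Finset.sum_congr rfl fun p hp => ?_
    rw [Finset.sum_insert (by simp [hR.ne hp]), Finset.sum_singleton]
  · intro p hp q hq hne
    have := hR.2 p hp q hq hne
    simp only [Finset.disjoint_insert_left, Finset.disjoint_singleton_left,
      Finset.mem_insert, Finset.mem_singleton]
    tauto

end Count

section Main

variable {R : Finset (V × V)} (hR : IsMRep G R)

lemma mem_UF {x : V} : x ∈ UF R ↔ x ∉ vertsF R := Finset.mem_compl

include hR

lemma FPF_subset : FPF G R ⊆ vertsF R := by
  intro v hv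
  obtain ⟨q, hq, _, rfl⟩ := mem_FPF.mp hv
  exact mem_vertsF_of_mem hq (Or.inr rfl)

lemma snd_eq_iff {p q : V × V} (hp : p ∈ R) (hq : q ∈ R) (h : p.2 = q.2) : p = q := by
  by_contra hne
  exact (hR.2 p hp q hq hne).2.2.2 h

lemma not_mem_FPF_fst {p : V × V} (hp : p ∈ R) : p.1 ∉ FPF G R := by
  intro h
  obtain ⟨q, hq, _, hq2⟩ := mem_FPF.mp h
  by_cases hpq : p = q
  · exact hR.ne hp (hpq ▸ hq2.symm)
  · exact (hR.2 p hp q hq hpq).2.1 hq2.symm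

lemma mem_FPF_snd_iff {p : V × V} (hp : p ∈ R) : p.2 ∈ FPF G R ↔ flexP G R p := by
  constructor
  · intro h
    obtain ⟨q, hq, hfl, hq2⟩ := mem_FPF.mp h
    rwa [snd_eq_iff hR hp hq hq2.symm]
  · intro h
    exact mem_FPF.mpr ⟨p, hp, h, rfl⟩

lemma card_FPF : (FPF G R).card = (R.filter (flexP G R)).card := by
  rw [FPF, Finset.card_image_of_injOn]
  intro p hp q hq h
  simp only [Finset.mem_coe, Finset.mem_filter] at hp hq
  exact snd_eq_iff hR hp.1 hq.1 h

lemma card_flex_le : (R.filter (flexP G R)).card ≤ R.card := Finset.card_filter_le _ _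

/-- Degree bound via forbidden neighbours. -/
lemma nbr_split {w : V} {X : Finset V} (hX : X ⊆ vertsF R) (hw : w ∈ vertsF R)
    (hwX : w ∉ X) (hnadj : ∀ v ∈ X, ¬ G.Adj w v) :
    G.degree w + X.card + 1 ≤ nn G R w + 2 * R.card := by
  have hsub : G.neighborFinset w ⊆ (G.neighborFinset w ∩ UF R) ∪ (vertsF R \ insert w X) := by
    intro v hv
    rw [mem_neighborFinset] at hv
    by_cases hvm : v ∈ vertsF R
    · refine Finset.mem_union_right _ (Finset.mem_sdiff.mpr ⟨hvm, ?_⟩)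
      simp only [Finset.mem_insert, not_or]
      exact ⟨fun h => G.irrefl (h ▸ hv), fun h => hnadj v h hv⟩
    · exact Finset.mem_union_left _ (Finset.mem_inter.mpr
        ⟨mem_neighborFinset _ _ _ |>.mpr hv, mem_UF.mpr hvm⟩)
  have hins : insert w X ⊆ vertsF R := Finset.insert_subset hw hX
  have hcard := Finset.card_le_card hsub
  have hc2 := Finset.card_union_le (G.neighborFinset w ∩ UF R) (vertsF R \ insert w X)
  rw [Finset.card_sdiff_of_subset hins, card_vertsF hR, Finset.card_insert_of_notMem hwX] at hc2
  have hle : X.card + 1 ≤ 2 * R.card := by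
    have := Finset.card_le_card hins
    rwa [Finset.card_insert_of_notMem hwX, card_vertsF hR] at this
  rw [← G.card_neighborFinset_eq_degree] at *
  unfold nn
  omega

variable (hmax : ∀ S : Finset (V × V), IsMRep G S → S.card ≤ R.card)

include hmax

/-- Pull one unmatched neighbour. -/
lemma exists_unb {w : V} (h : 1 ≤ nn G R w) : ∃ x, G.Adj w x ∧ x ∉ vertsF R := by
  obtain ⟨x, hx⟩ := Finset.card_pos.mp h
  rw [Finset.mem_inter, mem_neighborFinset, mem_UF] at hx
  exact ⟨x, hx.1, hx.2⟩

lemma exists_unb2 {w : V} (h : 2 ≤ nn G R w) (y : V) :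
    ∃ x, G.Adj w x ∧ x ∉ vertsF R ∧ x ≠ y := by
  have : 1 ≤ ((G.neighborFinset w ∩ UF R).erase y).card := by
    have := Finset.pred_card_le_card_erase (s := G.neighborFinset w ∩ UF R) (a := y)
    unfold nn at h
    omega
  obtain ⟨x, hx⟩ := Finset.card_pos.mp this
  rw [Finset.mem_erase, Finset.mem_inter, mem_neighborFinset, mem_UF] at hx
  exact ⟨x, hx.2.1, hx.2.2, hx.1⟩

/-- A flexible pair's second coordinate has no unmatched neighbours. -/
lemma FF1 {p : V × V} (hp : p ∈ R) (hfl : flexP G R p) : nn G R p.2 = 0 := by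
  by_contra h
  obtain ⟨y, hy, hyu⟩ := exists_unb hR hmax (Nat.one_le_iff_ne_zero.mpr h)
  obtain ⟨x, hx, hxu, hxy⟩ := exists_unb2 hR hmax hfl y
  exact F1 hR hmax hp hxu hyu hxy hx hy

/-- F2 consequence: a flexible partner cannot be adjacent to the partner of an
active vertex of another pair. -/
lemma FF2a {q p : V × V} (hq : q ∈ R) (hfl : flexP G R q) (hp : p ∈ R) (hpq : p ≠ q)
    (hact : 1 ≤ nn G R p.1) : ¬ G.Adj q.2 p.2 := by
  intro hadj
  obtain ⟨y, hy, hyu⟩ := exists_unb hR hmax hact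
  obtain ⟨x, hx, hxu, hxy⟩ := exists_unb2 hR hmax hfl y
  exact F2 hR hmax hq hp hpq.symm (Or.inl rfl) (Or.inl rfl) hxu hyu hxy hx hy hadj

lemma FF2b {q p : V × V} (hq : q ∈ R) (hfl : flexP G R q) (hp : p ∈ R) (hpq : p ≠ q)
    (hact : 1 ≤ nn G R p.2) : ¬ G.Adj q.2 p.1 := by
  intro hadj
  obtain ⟨y, hy, hyu⟩ := exists_unb hR hmax hact
  obtain ⟨x, hx, hxu, hxy⟩ := exists_unb2 hR hmax hfl y
  exact F2 hR hmax hq hp hpq.symm (Or.inl rfl) (Or.inr rfl) hxu hyu hxy hx hy hadj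

/-- F4 consequence. -/
lemma FF4 {p q l : V × V} (hp : p ∈ R) (hq : q ∈ R) (hl : l ∈ R)
    (hpq : p ≠ q) (hpl : p ≠ l) (hql : q ≠ l)
    (hflp : flexP G R p) (hflq : flexP G R q)
    (h3 : G.Adj p.2 l.1) (h4 : G.Adj q.2 l.2) : False := by
  obtain ⟨y, hy, hyu⟩ := exists_unb hR hmax (le_trans (by norm_num) hflq)
  obtain ⟨x, hx, hxu, hxy⟩ := exists_unb2 hR hmax hflp y
  exact F4 hR hmax hp hq hl hpq hpl hql (Or.inl rfl) hxu hyu hxy hx hy h3 h4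

end Main

section PerPair

variable (G) in
/-- Edges to flexible partners of other pairs. -/
def gg (R : Finset (V × V)) (p : V × V) : ℕ :=
  (G.neighborFinset p.1 ∩ (FPF G R \ {p.1, p.2})).card +
  (G.neighborFinset p.2 ∩ (FPF G R \ {p.1, p.2})).card

variable {R : Finset (V × V)} (hR : IsMRep G R)
  (hmax : ∀ S : Finset (V × V), IsMRep G S → S.card ≤ R.card)
  {D : ℕ} (hdeg : ∀ v : V, G.degree v ≤ D) (hD2 : 2 * R.card + 1 ≤ D)

include hR

lemma sdiff_pair_eq {p : V × V} (hp : p ∈ R) (hfl : ¬ flexP G R p) :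
    FPF G R \ {p.1, p.2} = FPF G R := by
  apply Finset.sdiff_eq_self_of_disjoint
  rw [Finset.disjoint_left]
  intro v hv hm
  simp only [Finset.mem_insert, Finset.mem_singleton] at hm
  rcases hm with rfl | rfl
  · exact not_mem_FPF_fst hR hp hv
  · exact hfl ((mem_FPF_snd_iff hR hp).mp hv)

include hmax hdeg hD2

/-- Per-pair bound, flexible case. -/
lemma per_flex {p : V × V} (hp : p ∈ R) (hfl : flexP G R p) :
    nn G R p.1 + nn G R p.2 + G.degree p.1 + G.degree p.2 + gg G R p + 1
      ≤ 2 * D + G.degree p.2 := by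
  have hnn2 : nn G R p.2 = 0 := FF1 hR hmax hp hfl
  have hgv : (G.neighborFinset p.2 ∩ (FPF G R \ {p.1, p.2})).card = 0 := by
    rw [Finset.card_eq_zero, Finset.eq_empty_iff_forall_notMem]
    intro v hv
    rw [Finset.mem_inter, mem_neighborFinset, Finset.mem_sdiff] at hv
    obtain ⟨hadj, hvF, hvp⟩ := hv
    obtain ⟨q, hq, hqfl, rfl⟩ := mem_FPF.mp hvF
    have hqp : q ≠ p := by
      rintro rfl
      simp at hvp
    exact FF2a hR hmax hq hqfl hp hqp.symm (le_trans (by norm_num) hfl) hadj.symm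
  -- nn p.1 + gu + 1 ≤ deg p.1
  have hkey : nn G R p.1 + (G.neighborFinset p.1 ∩ (FPF G R \ {p.1, p.2})).card + 1
      ≤ G.degree p.1 := by
    have hsub : (G.neighborFinset p.1 ∩ UF R) ∪
        ((G.neighborFinset p.1 ∩ (FPF G R \ {p.1, p.2})) ∪ {p.2}) ⊆ G.neighborFinset p.1 := by
      intro v hv
      simp only [Finset.mem_union, Finset.mem_inter, Finset.mem_singleton] at hv
      rcases hv with h | h | rfl
      · exact h.1
      · exact h.1
      · exact (mem_neighborFinset _ _ _).mpr (hR.1 p hp)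
    have hd1 : Disjoint (G.neighborFinset p.1 ∩ (FPF G R \ {p.1, p.2})) ({p.2} : Finset V) := by
      simp only [Finset.disjoint_singleton_right, Finset.mem_inter, Finset.mem_sdiff,
        Finset.mem_insert, Finset.mem_singleton, not_and, not_not]
      tauto
    have hd2 : Disjoint (G.neighborFinset p.1 ∩ UF R)
        ((G.neighborFinset p.1 ∩ (FPF G R \ {p.1, p.2})) ∪ {p.2}) := by
      rw [Finset.disjoint_union_right]
      constructor
      · refine Finset.disjoint_left.mpr fun v hv hv' => ?_
        rw [Finset.mem_inter, mem_UF] at hv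
        rw [Finset.mem_inter, Finset.mem_sdiff] at hv'
        exact hv.2 (FPF_subset hR hv'.2.1)
      · refine Finset.disjoint_left.mpr fun v hv hv' => ?_
        rw [Finset.mem_singleton] at hv'
        rw [Finset.mem_inter, mem_UF] at hv
        exact hv.2 (hv'.symm ▸ mem_vertsF_of_mem hp (Or.inr rfl))
    have := Finset.card_le_card hsub
    rw [Finset.card_union_of_disjoint hd2, Finset.card_union_of_disjoint hd1,
      Finset.card_singleton, G.card_neighborFinset_eq_degree] at this
    unfold nn
    omega
  have h1 := hdeg p.1
  unfold gg
  omega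

/-- Per-pair bound, shared case. -/
lemma per_shared {p : V × V} (hp : p ∈ R) (hfl : ¬ flexP G R p)
    (h1 : 1 ≤ nn G R p.1) (h2 : 1 ≤ nn G R p.2) (h21 : nn G R p.2 ≤ nn G R p.1) :
    nn G R p.1 + nn G R p.2 + G.degree p.1 + G.degree p.2 + gg G R p ≤ 2 * D := by
  have hsd := sdiff_pair_eq hR hp hfl
  have hnadj1 : ∀ v ∈ FPF G R, ¬ G.Adj p.1 v := by
    intro v hv hadj
    obtain ⟨q, hq, hqfl, rfl⟩ := mem_FPF.mp hv
    have hqp : q ≠ p := fun h => hfl (h ▸ hqfl)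
    exact FF2b hR hmax hq hqfl hp hqp.symm h2 hadj.symm
  have hnadj2 : ∀ v ∈ FPF G R, ¬ G.Adj p.2 v := by
    intro v hv hadj
    obtain ⟨q, hq, hqfl, rfl⟩ := mem_FPF.mp hv
    have hqp : q ≠ p := fun h => hfl (h ▸ hqfl)
    exact FF2a hR hmax hq hqfl hp hqp.symm h1 hadj.symm
  have hb1 := nbr_split hR (FPF_subset hR) (mem_vertsF_of_mem hp (Or.inl rfl))
    (not_mem_FPF_fst hR hp) hnadj1
  have hb2 := nbr_split hR (FPF_subset hR) (mem_vertsF_of_mem hp (Or.inr rfl))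
    (fun h => hfl ((mem_FPF_snd_iff hR hp).mp h)) hnadj2
  have hgu : (G.neighborFinset p.1 ∩ (FPF G R \ {p.1, p.2})).card = 0 := by
    rw [hsd, Finset.card_eq_zero, Finset.eq_empty_iff_forall_notMem]
    intro v hv
    rw [Finset.mem_inter, mem_neighborFinset] at hv
    exact hnadj1 v hv.2 hv.1
  have hgv : (G.neighborFinset p.2 ∩ (FPF G R \ {p.1, p.2})).card = 0 := by
    rw [hsd, Finset.card_eq_zero, Finset.eq_empty_iff_forall_notMem]
    intro v hv
    rw [Finset.mem_inter, mem_neighborFinset] at hv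
    exact hnadj2 v hv.2 hv.1
  have hn1 : nn G R p.1 ≤ 1 := by
    unfold flexP at hfl
    omega
  have hfm := card_flex_le (R := R) (G := G)
  rw [← card_FPF hR] at hfm
  unfold gg
  omega

/-- Per-pair bound, one-sided rigid case. -/
lemma per_onesided {p : V × V} (hp : p ∈ R) (hfl : ¬ flexP G R p)
    (h1 : 1 ≤ nn G R p.1) (h2 : nn G R p.2 = 0) :
    nn G R p.1 + nn G R p.2 + G.degree p.1 + G.degree p.2 + gg G R p ≤ 2 * D := by
  have hsd := sdiff_pair_eq hR hp hfl
  have hnadj2 : ∀ v ∈ FPF G R, ¬ G.Adj p.2 v := by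
    intro v hv hadj
    obtain ⟨q, hq, hqfl, rfl⟩ := mem_FPF.mp hv
    have hqp : q ≠ p := fun h => hfl (h ▸ hqfl)
    exact FF2a hR hmax hq hqfl hp hqp.symm h1 hadj.symm
  have hb2 := nbr_split hR (FPF_subset hR) (mem_vertsF_of_mem hp (Or.inr rfl))
    (fun h => hfl ((mem_FPF_snd_iff hR hp).mp h)) hnadj2
  have hgv : (G.neighborFinset p.2 ∩ (FPF G R \ {p.1, p.2})).card = 0 := by
    rw [hsd, Finset.card_eq_zero, Finset.eq_empty_iff_forall_notMem]
    intro v hv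
    rw [Finset.mem_inter, mem_neighborFinset] at hv
    exact hnadj2 v hv.2 hv.1
  have hgu : (G.neighborFinset p.1 ∩ (FPF G R \ {p.1, p.2})).card ≤ (FPF G R).card := by
    refine Finset.card_le_card ?_
    intro v hv
    rw [Finset.mem_inter, Finset.mem_sdiff] at hv
    exact hv.2.1
  have hn1 : nn G R p.1 ≤ 1 := by
    unfold flexP at hfl
    omega
  have hfm := card_flex_le (R := R) (G := G)
  rw [← card_FPF hR] at hfm
  have hd1 := hdeg p.1
  unfold gg
  omega

end PerPair

section PerPair2

variable {R : Finset (V × V)} (hR : IsMRep G R)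
  (hmax : ∀ S : Finset (V × V), IsMRep G S → S.card ≤ R.card)
  {D : ℕ} (hdeg : ∀ v : V, G.degree v ≤ D) (hD2 : 2 * R.card + 1 ≤ D)

include hR hmax hdeg hD2

/-- Per-pair bound, inactive case. -/
lemma per_inactive {p : V × V} (hp : p ∈ R)
    (h1 : nn G R p.1 = 0) (h2 : nn G R p.2 = 0) :
    nn G R p.1 + nn G R p.2 + G.degree p.1 + G.degree p.2 + gg G R p ≤ 2 * D := by
  have hfl : ¬ flexP G R p := by
    unfold flexP
    omega
  have hsd := sdiff_pair_eq hR hp hfl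
  have hfm := card_flex_le (R := R) (G := G)
  rw [← card_FPF hR] at hfm
  have hb1 := nbr_split (w := p.1) hR (Finset.empty_subset _)
    (mem_vertsF_of_mem hp (Or.inl rfl)) (Finset.notMem_empty _) (by simp)
  have hb2 := nbr_split (w := p.2) hR (Finset.empty_subset _)
    (mem_vertsF_of_mem hp (Or.inr rfl)) (Finset.notMem_empty _) (by simp)
  rw [Finset.card_empty] at hb1 hb2
  set gu := (G.neighborFinset p.1 ∩ (FPF G R \ {p.1, p.2})).card with hgu_def
  set gv := (G.neighborFinset p.2 ∩ (FPF G R \ {p.1, p.2})).card with hgv_def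
  have hgg : gg G R p = gu + gv := rfl
  have hextract : ∀ w v : V, v ∈ G.neighborFinset w ∩ (FPF G R \ {p.1, p.2}) →
      ∃ q ∈ R, flexP G R q ∧ q.2 = v ∧ G.Adj q.2 w ∧ q ≠ p := by
    intro w v hv
    rw [Finset.mem_inter, mem_neighborFinset, hsd] at hv
    obtain ⟨q, hq, hqfl, rfl⟩ := mem_FPF.mp hv.2
    exact ⟨q, hq, hqfl, rfl, hv.1.symm, fun h => hfl (h ▸ hqfl)⟩
  by_cases hgu0 : gu = 0
  · have hnadj1 : ∀ v ∈ FPF G R, ¬ G.Adj p.1 v := by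
      intro v hv hadj
      have hmem : v ∈ G.neighborFinset p.1 ∩ (FPF G R \ {p.1, p.2}) := by
        rw [Finset.mem_inter, mem_neighborFinset, hsd]
        exact ⟨hadj, hv⟩
      have : gu ≠ 0 := by
        rw [hgu_def]
        exact Finset.card_ne_zero_of_mem hmem
      exact this hgu0
    have hb1' := nbr_split hR (FPF_subset hR) (mem_vertsF_of_mem hp (Or.inl rfl))
      (not_mem_FPF_fst hR hp) hnadj1
    have hgv' : gv ≤ (FPF G R).card := by
      rw [hgv_def]
      refine Finset.card_le_card fun v hv => ?_
      rw [Finset.mem_inter, Finset.mem_sdiff] at hv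
      exact hv.2.1
    omega
  by_cases hgv0 : gv = 0
  · have hnadj2 : ∀ v ∈ FPF G R, ¬ G.Adj p.2 v := by
      intro v hv hadj
      have hmem : v ∈ G.neighborFinset p.2 ∩ (FPF G R \ {p.1, p.2}) := by
        rw [Finset.mem_inter, mem_neighborFinset, hsd]
        exact ⟨hadj, hv⟩
      have : gv ≠ 0 := by
        rw [hgv_def]
        exact Finset.card_ne_zero_of_mem hmem
      exact this hgv0
    have hb2' := nbr_split hR (FPF_subset hR) (mem_vertsF_of_mem hp (Or.inr rfl))
      (fun h => hfl ((mem_FPF_snd_iff hR hp).mp h)) hnadj2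
    have hgu' : gu ≤ (FPF G R).card := by
      rw [hgu_def]
      refine Finset.card_le_card fun v hv => ?_
      rw [Finset.mem_inter, Finset.mem_sdiff] at hv
      exact hv.2.1
    omega
  obtain ⟨z1, hz1⟩ := Finset.card_pos.mp (Nat.pos_of_ne_zero hgu0)
  obtain ⟨z2, hz2⟩ := Finset.card_pos.mp (Nat.pos_of_ne_zero hgv0)
  obtain ⟨q1, hq1, hq1fl, hq1z, hq1adj, hq1p⟩ := hextract p.1 z1 hz1
  obtain ⟨q2, hq2, hq2fl, hq2z, hq2adj, hq2p⟩ := hextract p.2 z2 hz2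
  have hgu1 : gu ≤ 1 := by
    by_contra hgt
    obtain ⟨a, ha, b, hb, hab⟩ := Finset.one_lt_card.mp (show 1 < gu by omega)
    obtain ⟨qa, hqa, hqafl, hqaz, hqaadj, hqap⟩ := hextract p.1 a ha
    obtain ⟨qb, hqb, hqbfl, hqbz, hqbadj, hqbp⟩ := hextract p.1 b hb
    have hqaqb : qa ≠ qb := by
      rintro rfl
      exact hab (hqaz ▸ hqbz ▸ rfl)
    by_cases hne : qa = q2
    · exact FF4 hR hmax hqb hq2 hp (fun h => hqaqb (hne.trans h.symm)) hqbp hq2p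
        hqbfl hq2fl hqbadj hq2adj
    · exact FF4 hR hmax hqa hq2 hp hne hqap hq2p hqafl hq2fl hqaadj hq2adj
  have hgv1 : gv ≤ 1 := by
    by_contra hgt
    obtain ⟨a, ha, b, hb, hab⟩ := Finset.one_lt_card.mp (show 1 < gv by omega)
    obtain ⟨qa, hqa, hqafl, hqaz, hqaadj, hqap⟩ := hextract p.2 a ha
    obtain ⟨qb, hqb, hqbfl, hqbz, hqbadj, hqbp⟩ := hextract p.2 b hb
    have hqaqb : qa ≠ qb := by
      rintro rfl
      exact hab (hqaz ▸ hqbz ▸ rfl)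
    by_cases hne : qa = q1
    · exact FF4 hR hmax hq1 hqb hp (fun h => hqaqb (h.symm.trans hne.symm).symm) hq1p hqbp
        hq1fl hqbfl hq1adj hqbadj
    · exact FF4 hR hmax hq1 hqa hp (fun h => hne h.symm) hq1p hqap hq1fl hqafl hq1adj hqaadj
  omega

end PerPair2

section Total

variable {R : Finset (V × V)} (hR : IsMRep G R)
  (hmax : ∀ S : Finset (V × V), IsMRep G S → S.card ≤ R.card)
  {D : ℕ} (hdeg : ∀ v : V, G.degree v ≤ D) (hD2 : 2 * R.card + 1 ≤ D)

include hR hmax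

/-- The transfer inequality. -/
lemma transfer_le :
    ∑ p ∈ R, (if flexP G R p then G.degree p.2 else 0) ≤
      ∑ p ∈ R, gg G R p + (R.filter (flexP G R)).card := by
  classical
  set W : Finset V := vertsF R \ FPF G R with hW
  -- each flexible partner's degree counts only inside W
  have hstepA : ∀ p ∈ R, flexP G R p → G.degree p.2 = (G.neighborFinset p.2 ∩ W).card := by
    intro p hp hfl
    rw [← G.card_neighborFinset_eq_degree]
    congr 1
    symm
    rw [Finset.inter_eq_left]
    intro v hv
    rw [mem_neighborFinset] at hv
    have hvV : v ∈ vertsF R := by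
      by_contra hnv
      have : v ∈ G.neighborFinset p.2 ∩ UF R := by
        rw [Finset.mem_inter, mem_neighborFinset, mem_UF]
        exact ⟨hv, hnv⟩
      have := Finset.card_ne_zero_of_mem this
      exact this (FF1 hR hmax hp hfl)
    rw [hW, Finset.mem_sdiff]
    refine ⟨hvV, fun hvF => ?_⟩
    obtain ⟨q, hq, hqfl, rfl⟩ := mem_FPF.mp hvF
    have hqp : q ≠ p := by
      rintro rfl
      exact G.irrefl hv
    exact FF2a hR hmax hq hqfl hp hqp.symm (le_trans (by norm_num) hfl) hv.symm
  have hB : ∑ p ∈ R.filter (flexP G R), (G.neighborFinset p.2 ∩ W).card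
      = ∑ z ∈ FPF G R, (G.neighborFinset z ∩ W).card := by
    rw [FPF, Finset.sum_image]
    intro p hp q hq h
    rw [Finset.mem_coe, Finset.mem_filter] at hp hq
    exact snd_eq_iff hR hp.1 hq.1 h
  have hC := count_sym (G := G) (FPF G R) W
  -- decompose W over pairs
  have hWdec : W = R.biUnion (fun p => ({p.1, p.2} : Finset V) \ FPF G R) := by
    ext v
    simp only [hW, Finset.mem_sdiff, Finset.mem_biUnion, Finset.mem_insert,
      Finset.mem_singleton]
    constructor
    · rintro ⟨hv, hnf⟩
      obtain ⟨p, hp, hvp⟩ := mem_vertsF.mp hv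
      exact ⟨p, hp, ⟨by tauto, hnf⟩⟩
    · rintro ⟨p, hp, ⟨hvp, hnf⟩⟩
      exact ⟨mem_vertsF.mpr ⟨p, hp, by tauto⟩, hnf⟩
  have hD : ∑ w ∈ W, (G.neighborFinset w ∩ FPF G R).card
      = ∑ p ∈ R, ∑ w ∈ ({p.1, p.2} : Finset V) \ FPF G R,
          (G.neighborFinset w ∩ FPF G R).card := by
    rw [hWdec, Finset.sum_biUnion]
    intro p hp q hq hne
    have := hR.2 p hp q hq hne
    refine Finset.disjoint_left.mpr fun v hv hv' => ?_
    rw [Finset.mem_sdiff, Finset.mem_insert, Finset.mem_singleton] at hv hv'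
    rcases hv.1 with rfl | rfl <;> rcases hv'.1 with h | h <;> tauto
  have hE : ∀ p ∈ R, ∑ w ∈ ({p.1, p.2} : Finset V) \ FPF G R,
      (G.neighborFinset w ∩ FPF G R).card ≤ gg G R p + (if flexP G R p then 1 else 0) := by
    intro p hp
    by_cases hfl : flexP G R p
    · have hset : ({p.1, p.2} : Finset V) \ FPF G R = {p.1} := by
        ext v
        simp only [Finset.mem_sdiff, Finset.mem_insert, Finset.mem_singleton]
        constructor
        · rintro ⟨rfl | rfl, hnf⟩
          · rfl
          · exact absurd ((mem_FPF_snd_iff hR hp).mpr hfl) hnf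
        · rintro rfl
          exact ⟨Or.inl rfl, not_mem_FPF_fst hR hp⟩
      rw [hset, Finset.sum_singleton, if_pos hfl]
      have hsub : G.neighborFinset p.1 ∩ FPF G R ⊆
          (G.neighborFinset p.1 ∩ (FPF G R \ {p.1, p.2})) ∪ {p.2} := by
        intro v hv
        rw [Finset.mem_inter] at hv
        by_cases hvp : v = p.2
        · exact Finset.mem_union_right _ (Finset.mem_singleton.mpr hvp)
        · refine Finset.mem_union_left _ (Finset.mem_inter.mpr ⟨hv.1, ?_⟩)
          rw [Finset.mem_sdiff]
          refine ⟨hv.2, ?_⟩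
          simp only [Finset.mem_insert, Finset.mem_singleton]
          push_neg
          refine ⟨fun h => ?_, hvp⟩
          exact not_mem_FPF_fst hR hp (h ▸ hv.2)
      have := Finset.card_le_card hsub
      have hcu := Finset.card_union_le
        (G.neighborFinset p.1 ∩ (FPF G R \ {p.1, p.2})) ({p.2} : Finset V)
      rw [Finset.card_singleton] at hcu
      unfold gg
      omega
    · have hset : ({p.1, p.2} : Finset V) \ FPF G R = {p.1, p.2} := by
        apply Finset.sdiff_eq_self_of_disjoint
        refine Finset.disjoint_left.mpr fun v hv hv' => ?_
        rw [Finset.mem_insert, Finset.mem_singleton] at hv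
        rcases hv with rfl | rfl
        · exact not_mem_FPF_fst hR hp hv'
        · exact hfl ((mem_FPF_snd_iff hR hp).mp hv')
      rw [hset, if_neg hfl, Finset.sum_insert (by simp [hR.ne hp]), Finset.sum_singleton]
      unfold gg
      rw [sdiff_pair_eq hR hp hfl]
      omega
  calc ∑ p ∈ R, (if flexP G R p then G.degree p.2 else 0)
      = ∑ p ∈ R.filter (flexP G R), G.degree p.2 := by
        rw [Finset.sum_filter]
    _ = ∑ p ∈ R.filter (flexP G R), (G.neighborFinset p.2 ∩ W).card := by
        refine Finset.sum_congr rfl fun p hp => ?_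
        rw [Finset.mem_filter] at hp
        exact hstepA p hp.1 hp.2
    _ = ∑ z ∈ FPF G R, (G.neighborFinset z ∩ W).card := hB
    _ = ∑ w ∈ W, (G.neighborFinset w ∩ FPF G R).card := hC
    _ = ∑ p ∈ R, ∑ w ∈ ({p.1, p.2} : Finset V) \ FPF G R,
          (G.neighborFinset w ∩ FPF G R).card := hD
    _ ≤ ∑ p ∈ R, (gg G R p + (if flexP G R p then 1 else 0)) := Finset.sum_le_sum hE
    _ = ∑ p ∈ R, gg G R p + (R.filter (flexP G R)).card := by
        rw [Finset.sum_add_distrib, Finset.sum_boole]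
        simp

include hdeg hD2

/-- The total per-pair sum bound. -/
lemma total_bound (horient : ∀ p ∈ R, nn G R p.2 ≤ nn G R p.1) :
    ∑ p ∈ R, (nn G R p.1 + nn G R p.2 + G.degree p.1 + G.degree p.2)
      ≤ 2 * R.card * D := by
  classical
  have hper : ∀ p ∈ R,
      nn G R p.1 + nn G R p.2 + G.degree p.1 + G.degree p.2 + gg G R p
        + (if flexP G R p then 1 else 0)
      ≤ 2 * D + (if flexP G R p then G.degree p.2 else 0) := by
    intro p hp
    by_cases hfl : flexP G R p
    · rw [if_pos hfl, if_pos hfl]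
      exact per_flex hR hmax hdeg hD2 hp hfl
    · rw [if_neg hfl, if_neg hfl]
      rcases Nat.eq_zero_or_pos (nn G R p.1) with h1 | h1
      · have h2 : nn G R p.2 = 0 := le_antisymm (h1 ▸ horient p hp) (Nat.zero_le _)
        simpa using per_inactive hR hmax hdeg hD2 hp h1 h2
      · rcases Nat.eq_zero_or_pos (nn G R p.2) with h2 | h2
        · simpa using per_onesided hR hmax hdeg hD2 hp hfl h1 h2
        · simpa using per_shared hR hmax hdeg hD2 hp hfl h1 h2 (horient p hp)
  have hsum := Finset.sum_le_sum hper
  have e1 : ∑ p ∈ R, (nn G R p.1 + nn G R p.2 + G.degree p.1 + G.degree p.2 + gg G R p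
        + (if flexP G R p then 1 else 0))
      = ∑ p ∈ R, (nn G R p.1 + nn G R p.2 + G.degree p.1 + G.degree p.2)
        + ∑ p ∈ R, gg G R p + ∑ p ∈ R, (if flexP G R p then 1 else 0) := by
    rw [Finset.sum_add_distrib, Finset.sum_add_distrib]
  have e2 : ∑ p ∈ R, (2 * D + (if flexP G R p then G.degree p.2 else 0))
      = R.card * (2 * D) + ∑ p ∈ R, (if flexP G R p then G.degree p.2 else 0) := by
    rw [Finset.sum_add_distrib, Finset.sum_const, smul_eq_mul]
  rw [e1, e2] at hsum
  have htr := transfer_le hR hmax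
  have hb : ∑ p ∈ R, (if flexP G R p then (1:ℕ) else 0) = (R.filter (flexP G R)).card := by
    rw [Finset.sum_boole]
    simp
  rw [hb] at hsum
  have : R.card * (2 * D) = 2 * R.card * D := by ring
  omega

end Total

/-- There is an oriented maximum matching representation. -/
lemma exists_oriented_max (G : SimpleGraph V) [DecidableRel G.Adj] :
    ∃ R : Finset (V × V), IsMRep G R ∧ (∀ S : Finset (V × V), IsMRep G S → S.card ≤ R.card)
      ∧ ∀ p ∈ R, nn G R p.2 ≤ nn G R p.1 := by
  classical
  obtain ⟨R₀, h0, hm0⟩ := exists_max_mrep G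
  set act : V × V → V × V := fun p => if nn G R₀ p.2 ≤ nn G R₀ p.1 then p else p.swap
    with hact
  set R : Finset (V × V) := R₀.image act with hRdef
  have coordsact : ∀ p : V × V, ((act p).1 = p.1 ∧ (act p).2 = p.2) ∨
      ((act p).1 = p.2 ∧ (act p).2 = p.1) := by
    intro p
    rw [hact]
    dsimp only
    split
    · exact Or.inl ⟨rfl, rfl⟩
    · exact Or.inr ⟨rfl, rfl⟩
  have hinj : ∀ p ∈ R₀, ∀ q ∈ R₀, act p = act q → p = q := by
    intro p hp q hq h
    by_contra hne
    have hd := h0.2 p hp q hq hne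
    rcases coordsact p with ⟨e1, _⟩ | ⟨e1, _⟩ <;> rcases coordsact q with ⟨f1, _⟩ | ⟨f1, _⟩ <;>
      rw [← e1, ← f1, h] at hd <;> tauto
  have hverts : vertsF R = vertsF R₀ := by
    ext v
    rw [mem_vertsF, mem_vertsF]
    constructor
    · rintro ⟨p, hp, hv⟩
      rw [hRdef] at hp
      obtain ⟨q, hq, rfl⟩ := Finset.mem_image.mp hp
      rcases coordsact q with ⟨e1, e2⟩ | ⟨e1, e2⟩ <;> rw [e1, e2] at hv <;>
        exact ⟨q, hq, by tauto⟩
    · rintro ⟨p, hp, hv⟩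
      refine ⟨act p, Finset.mem_image_of_mem act hp, ?_⟩
      rcases coordsact p with ⟨e1, e2⟩ | ⟨e1, e2⟩ <;> rw [e1, e2] <;> tauto
  have hnn : ∀ w, nn G R w = nn G R₀ w := by
    intro w
    unfold nn UF
    rw [hverts]
  have hrep : IsMRep G R := by
    constructor
    · intro p hp
      rw [hRdef] at hp
      obtain ⟨q, hq, rfl⟩ := Finset.mem_image.mp hp
      rcases coordsact q with ⟨e1, e2⟩ | ⟨e1, e2⟩ <;> rw [e1, e2]
      · exact h0.1 q hq
      · exact (h0.1 q hq).symm
    · intro p hp q hq hne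
      rw [hRdef] at hp hq
      obtain ⟨p', hp', rfl⟩ := Finset.mem_image.mp hp
      obtain ⟨q', hq', rfl⟩ := Finset.mem_image.mp hq
      have hne' : p' ≠ q' := fun h => hne (h ▸ rfl)
      have hd := h0.2 p' hp' q' hq' hne'
      rcases coordsact p' with ⟨e1, e2⟩ | ⟨e1, e2⟩ <;>
        rcases coordsact q' with ⟨f1, f2⟩ | ⟨f1, f2⟩ <;>
        rw [e1, e2, f1, f2] <;> tauto
  have hcard : R.card = R₀.card := Finset.card_image_of_injOn hinj
  refine ⟨R, hrep, fun S hS => hcard ▸ hm0 S hS, ?_⟩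
  intro p hp
  rw [hRdef] at hp
  obtain ⟨q, hq, rfl⟩ := Finset.mem_image.mp hp
  rw [hnn, hnn]
  by_cases hc : nn G R₀ q.2 ≤ nn G R₀ q.1
  · have : act q = q := if_pos hc
    rw [this]
    exact hc
  · have : act q = q.swap := if_neg hc
    rw [this, Prod.fst_swap, Prod.snd_swap]
    exact le_of_not_ge hc

section EdgeBound

variable {R : Finset (V × V)} (hR : IsMRep G R)
  (hmax : ∀ S : Finset (V × V), IsMRep G S → S.card ≤ R.card)
  {D : ℕ} (hdeg : ∀ v : V, G.degree v ≤ D) (hD2 : 2 * R.card + 1 ≤ D)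
  (horient : ∀ p ∈ R, nn G R p.2 ≤ nn G R p.1)

include hR hmax hdeg hD2 horient

lemma edge_bound : 2 * G.edgeFinset.card ≤ 2 * R.card * D := by
  classical
  have hsumdeg := G.sum_degrees_eq_twice_card_edges
  have hsplit := Finset.sum_add_sum_compl (vertsF R) (fun v => G.degree v)
  have hU : ∑ x ∈ UF R, G.degree x = ∑ w ∈ vertsF R, nn G R w := by
    have h1 : ∀ x ∈ UF R, G.degree x = (G.neighborFinset x ∩ vertsF R).card := by
      intro x hx
      rw [← G.card_neighborFinset_eq_degree]
      congr 1
      symm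
      rw [Finset.inter_eq_left]
      intro v hv
      rw [mem_neighborFinset] at hv
      by_contra hnv
      exact F0 hR hmax (mem_UF.mp hx) hnv hv
    rw [Finset.sum_congr rfl h1, count_sym]
    rfl
  have hvsum : ∑ w ∈ vertsF R, (G.degree w + nn G R w)
      = ∑ p ∈ R, (nn G R p.1 + nn G R p.2 + G.degree p.1 + G.degree p.2) := by
    rw [sum_vertsF hR]
    exact Finset.sum_congr rfl fun p _ => by ring
  have htot := total_bound hR hmax hdeg hD2 horient
  have : ∑ w ∈ vertsF R, (G.degree w + nn G R w)
      = ∑ w ∈ vertsF R, G.degree w + ∑ w ∈ vertsF R, nn G R w :=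
    Finset.sum_add_distrib
  have hcompl : ∑ x ∈ (vertsF R)ᶜ, G.degree x = ∑ x ∈ UF R, G.degree x := rfl
  omega

end EdgeBound

/-- Convert a matching representation into a subgraph. -/
def mrepSubgraph (G : SimpleGraph V) (R : Finset (V × V)) (h : IsMRep G R) : G.Subgraph where
  verts := ↑(vertsF R)
  Adj a b := ∃ p ∈ R, (p.1 = a ∧ p.2 = b) ∨ (p.1 = b ∧ p.2 = a)
  adj_sub := by
    rintro a b ⟨p, hp, ⟨rfl, rfl⟩ | ⟨rfl, rfl⟩⟩
    · exact h.1 p hp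
    · exact (h.1 p hp).symm
  edge_vert := by
    rintro a b ⟨p, hp, ⟨rfl, rfl⟩ | ⟨rfl, rfl⟩⟩
    · exact Finset.mem_coe.mpr (mem_vertsF_of_mem hp (Or.inl rfl))
    · exact Finset.mem_coe.mpr (mem_vertsF_of_mem hp (Or.inr rfl))
  symm := by
    constructor
    rintro a b ⟨p, hp, hab⟩
    exact ⟨p, hp, by tauto⟩

lemma mrepSubgraph_isMatching {R : Finset (V × V)} (h : IsMRep G R) :
    (mrepSubgraph G R h).IsMatching := by
  intro v hv
  obtain ⟨p, hp, hvp⟩ := mem_vertsF.mp (Finset.mem_coe.mp hv)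
  have hne := h.ne hp
  rcases hvp with rfl | rfl
  · refine ⟨p.2, ⟨p, hp, Or.inl ⟨rfl, rfl⟩⟩, ?_⟩
    rintro w ⟨q, hq, ⟨hq1, hq2⟩ | ⟨hq1, hq2⟩⟩
    · by_cases hpq : p = q
      · rw [← hq2, ← hpq]
      · exact absurd hq1.symm ((h.2 p hp q hq hpq).1)
    · by_cases hpq : p = q
      · exact absurd (hpq ▸ hq2 : q.2 = q.1) (hpq ▸ hne).symm
      · exact absurd hq2.symm ((h.2 p hp q hq hpq).2.1)
  · refine ⟨p.1, ⟨p, hp, Or.inr ⟨rfl, rfl⟩⟩, ?_⟩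
    rintro w ⟨q, hq, ⟨hq1, hq2⟩ | ⟨hq1, hq2⟩⟩
    · by_cases hpq : p = q
      · exact absurd (hpq ▸ hq1 : q.1 = q.2) (hpq ▸ hne)
      · exact absurd hq1.symm ((h.2 p hp q hq hpq).2.2.1)
    · by_cases hpq : p = q
      · rw [← hq1, ← hpq]
      · exact absurd hq2.symm ((h.2 p hp q hq hpq).2.2.2)

lemma mrepSubgraph_edgeSet_card {R : Finset (V × V)} (h : IsMRep G R) :
    Nat.card (mrepSubgraph G R h).edgeSet = R.card := by
  classical
  have hset : (mrepSubgraph G R h).edgeSet = ↑(R.image fun p => s(p.1, p.2)) := by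
    ext e
    induction e with
    | _ a b =>
      rw [SimpleGraph.Subgraph.mem_edgeSet]
      simp only [Finset.coe_image, Set.mem_image, Finset.mem_coe]
      constructor
      · rintro ⟨p, hp, ⟨rfl, rfl⟩ | ⟨rfl, rfl⟩⟩
        · exact ⟨p, hp, rfl⟩
        · exact ⟨p, hp, Sym2.eq_swap⟩
      · rintro ⟨p, hp, hpe⟩
        rw [Sym2.eq_iff] at hpe
        exact ⟨p, hp, by tauto⟩
  rw [hset]
  rw [Nat.card_eq_fintype_card, ← Set.toFinset_card, Finset.toFinset_coe,
    Finset.card_image_of_injOn]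
  intro p hp q hq he
  rw [Sym2.eq_iff] at he
  by_contra hne
  have hd := h.2 p (Finset.mem_coe.mp hp) q (Finset.mem_coe.mp hq) hne
  tauto

lemma edgeCount_eq_edgeFinset_card : edgeCount G = G.edgeFinset.card := by
  rw [edgeCount, Nat.card_eq_fintype_card, ← Set.toFinset_card]
  congr 1


/-- If `G` has maximum degree `Δ`, `k ≥ 1`, `e(G) > (k-1)Δ` and
`Δ ≥ 2k - 1`, then `G` contains a matching of size `k`. -/
theorem stmt7 {V : Type} [Fintype V] [DecidableEq V] (G : SimpleGraph V)
    [DecidableRel G.Adj] (D k : ℕ) (hk : 1 ≤ k) (hD : G.maxDegree = D)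
    (he : (k - 1) * D < edgeCount G) (h2 : 2 * k - 1 ≤ D) :
    ∃ M : G.Subgraph, M.IsMatching ∧ Nat.card M.edgeSet = k := by
  classical
  obtain ⟨R, hR, hmax, horient⟩ := exists_oriented_max G
  have hdeg : ∀ v, G.degree v ≤ D := fun v => hD ▸ G.degree_le_maxDegree v
  rw [edgeCount_eq_edgeFinset_card] at he
  have hk' : k ≤ R.card := by
    by_contra hlt
    push_neg at hlt
    have hD2 : 2 * R.card + 1 ≤ D := by omega
    have hb := edge_bound hR hmax hdeg hD2 horient
    have hb' : 2 * G.edgeFinset.card ≤ 2 * ((k - 1) * D) := by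
      calc 2 * G.edgeFinset.card ≤ 2 * R.card * D := hb
        _ = 2 * (R.card * D) := by ring
        _ ≤ 2 * ((k - 1) * D) := by
            have : R.card ≤ k - 1 := by omega
            exact Nat.mul_le_mul_left 2 (Nat.mul_le_mul_right D this)
    omega
  obtain ⟨R', hsub, hcard⟩ := Finset.exists_subset_card_eq hk'
  exact ⟨mrepSubgraph G R' (hR.subset hsub), mrepSubgraph_isMatching _,
    by rw [mrepSubgraph_edgeSet_card]; exact hcard⟩
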